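/- Let p be an odd prime, a an integer with 1 ≤ a ≤ (p-1)/2, r ≥ 0 an integer, and let s₀,…,s_r, t₁,…,t_r be integers. Then ∑_{k=0}^{p-1} (2a - s₀p)_k (2a - s₁p)_k ⋯ (2a - s_rp)_k / ((1+t₁p)_k ⋯ (1+t_rp)_k * k!) ≡ ∑_{k=0}^{p-1} ((2a - p)_k)^{r+1} / (k!)^{r+1} (mod p), and in particular when r is replaced by 2r the sum is ≡ 0 (mod p). -/

import Mathlib

open Polynomial Finset

lemma asc_eval_intCast {R : Type*} [Ring R] (k : ℕ) (x : ℤ) :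
    (ascPochhammer R k).eval ((x : R)) = (((ascPochhammer ℤ k).eval x : ℤ) : R) := by
  rw [ascPochhammer_eval₂ (Int.castRingHom R)]
  exact Polynomial.eval₂_at_apply (Int.castRingHom R) x

lemma asc_eval_one {R : Type*} [Semiring R] (k : ℕ) :
    (ascPochhammer R k).eval 1 = (k.factorial : R) := by
  rw [show (1 : R) = ((1 : ℕ) : R) by norm_num, ← ascPochhammer_eval_cast,
    ascPochhammer_nat_eq_ascFactorial, Nat.one_ascFactorial]

theorem shifted_parameters_congr (p : ℕ) [Fact p.Prime] (hp : Odd p)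
    (a : ℕ) (ha1 : 1 ≤ a) (ha2 : 2 * a ≤ p - 1) (r : ℕ)
    (s : Fin (r + 1) → ℤ) (t : Fin r → ℤ) :
    ‖(∑ k ∈ Finset.range p,
          (∏ i, (ascPochhammer ℚ_[p] k).eval ((2 * a : ℚ_[p]) - s i * p))
            / ((∏ j, (ascPochhammer ℚ_[p] k).eval ((1 : ℚ_[p]) + t j * p))
                * (k.factorial : ℚ_[p])))
        - ∑ k ∈ Finset.range p,
          ((ascPochhammer ℚ_[p] k).eval ((2 * a : ℚ_[p]) - p)) ^ (r + 1)
            / (k.factorial : ℚ_[p]) ^ (r + 1)‖ ≤ (p : ℝ)⁻¹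
    ∧ (Even r →
        ‖∑ k ∈ Finset.range p,
            (∏ i, (ascPochhammer ℚ_[p] k).eval ((2 * a : ℚ_[p]) - s i * p))
              / ((∏ j, (ascPochhammer ℚ_[p] k).eval ((1 : ℚ_[p]) + t j * p))
                  * (k.factorial : ℚ_[p]))‖ ≤ (p : ℝ)⁻¹) := by
  have hP : p.Prime := Fact.out
  have hp2 : 2 ≤ p := hP.two_le
  have unit_norm : ∀ z : ℤ, ¬ (p:ℤ) ∣ z → ‖(z : ℚ_[p])‖ = 1 := by
    intro z hz
    refine le_antisymm (Padic.norm_int_le_one z) ?_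
    by_contra h
    push_neg at h
    exact hz (Padic.norm_intCast_lt_one_iff.mp h)
  have key : ∀ k ∈ Finset.range p,
      ‖(∏ i, (ascPochhammer ℚ_[p] k).eval ((2 * a : ℚ_[p]) - s i * p))
          / ((∏ j, (ascPochhammer ℚ_[p] k).eval ((1 : ℚ_[p]) + t j * p))
              * (k.factorial : ℚ_[p]))
        - ((ascPochhammer ℚ_[p] k).eval ((2 * a : ℚ_[p]) - p)) ^ (r + 1)
            / (k.factorial : ℚ_[p]) ^ (r + 1)‖ ≤ (p : ℝ)⁻¹ := by
    intro k hk
    rw [Finset.mem_range] at hk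
    have hfac : ¬ (p:ℤ) ∣ ((k.factorial : ℕ) : ℤ) := by
      rw [Int.natCast_dvd_natCast]
      intro h
      have := (Nat.Prime.dvd_factorial hP).mp h
      omega
    have castEval : ∀ x : ℤ, (((ascPochhammer ℤ k).eval x : ℤ) : ZMod p)
        = (ascPochhammer (ZMod p) k).eval ((x : ZMod p)) := fun x =>
      (asc_eval_intCast k x).symm
    set AA : ℤ := ∏ i, (ascPochhammer ℤ k).eval (2 * (a:ℤ) - s i * p) with hAAdef
    set BB : ℤ := (∏ j, (ascPochhammer ℤ k).eval (1 + t j * p)) * (k.factorial : ℤ) with hBBdef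
    set CC : ℤ := ((ascPochhammer ℤ k).eval (2 * (a:ℤ) - p)) ^ (r + 1) with hCCdef
    set DD : ℤ := ((k.factorial : ℕ) : ℤ) ^ (r + 1) with hDDdef
    have e1 : (∏ i, (ascPochhammer ℚ_[p] k).eval ((2 * a : ℚ_[p]) - s i * p))
        = (AA : ℚ_[p]) := by
      rw [hAAdef]
      push_cast
      refine Finset.prod_congr rfl fun i _ => ?_
      rw [show ((2 * a : ℚ_[p]) - s i * p) = (((2 * (a:ℤ) - s i * p : ℤ)) : ℚ_[p]) by
        push_cast; ring, asc_eval_intCast]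
    have e2 : ((∏ j, (ascPochhammer ℚ_[p] k).eval ((1 : ℚ_[p]) + t j * p))
        * (k.factorial : ℚ_[p])) = (BB : ℚ_[p]) := by
      rw [hBBdef]
      push_cast
      congr 1
      refine Finset.prod_congr rfl fun j _ => ?_
      rw [show ((1 : ℚ_[p]) + t j * p) = (((1 + t j * p : ℤ)) : ℚ_[p]) by
        push_cast; ring, asc_eval_intCast]
    have e3 : ((ascPochhammer ℚ_[p] k).eval ((2 * a : ℚ_[p]) - p)) ^ (r + 1)
        = (CC : ℚ_[p]) := by
      rw [hCCdef]
      push_cast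
      rw [show ((2 * a : ℚ_[p]) - p) = (((2 * (a:ℤ) - p : ℤ)) : ℚ_[p]) by
        push_cast; ring, asc_eval_intCast]
    have e4 : ((k.factorial : ℕ) : ℚ_[p]) ^ (r + 1) = (DD : ℚ_[p]) := by
      rw [hDDdef]; push_cast; ring
    have hfacnorm : ‖((k.factorial : ℕ) : ℚ_[p])‖ = 1 := by
      have := unit_norm ((k.factorial : ℕ) : ℤ) hfac
      push_cast at this
      exact this
    have hBj : ∀ j : Fin r, ¬ (p:ℤ) ∣ (ascPochhammer ℤ k).eval (1 + t j * p) := by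
      intro j hdvd
      rw [← ZMod.intCast_zmod_eq_zero_iff_dvd, castEval] at hdvd
      have harg : ((1 + t j * p : ℤ) : ZMod p) = 1 := by
        push_cast [ZMod.natCast_self]
        ring
      rw [harg, asc_eval_one, ZMod.natCast_eq_zero_iff] at hdvd
      have := (Nat.Prime.dvd_factorial hP).mp hdvd
      omega
    have hBBdvd : ¬ (p:ℤ) ∣ BB := by
      rw [hBBdef]
      intro h
      rcases (Int.Prime.dvd_mul' hP h) with h | h
      · rcases (Prime.dvd_finset_prod_iff (Nat.prime_iff_prime_int.mp hP) _).mp h with ⟨j, _, hj⟩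
        exact hBj j hj
      · exact hfac h
    have hBBnorm : ‖(BB : ℚ_[p])‖ = 1 := unit_norm BB hBBdvd
    have hDDnorm : ‖(DD : ℚ_[p])‖ = 1 := by
      rw [hDDdef]
      push_cast
      rw [norm_pow, hfacnorm, one_pow]
    have hBBne : (BB : ℚ_[p]) ≠ 0 := by
      intro h; rw [h, norm_zero] at hBBnorm; norm_num at hBBnorm
    have hDDne : (DD : ℚ_[p]) ≠ 0 := by
      intro h; rw [h, norm_zero] at hDDnorm; norm_num at hDDnorm
    rw [e1, e2, e3, e4, div_sub_div _ _ hBBne hDDne, norm_div,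
      show ((AA:ℚ_[p]) * DD - BB * CC) = ((AA * DD - BB * CC : ℤ) : ℚ_[p]) by push_cast; ring,
      norm_mul, hBBnorm, hDDnorm, one_mul, div_one]
    have hdvd : ((p:ℤ))^1 ∣ (AA * DD - BB * CC) := by
      rw [pow_one, ← ZMod.intCast_zmod_eq_zero_iff_dvd]
      rw [hAAdef, hBBdef, hCCdef, hDDdef]
      push_cast
      simp only [castEval]
      have harg1 : ∀ i : Fin (r+1), ((2 * (a:ℤ) - s i * p : ℤ) : ZMod p) = (2 * a : ZMod p) := by
        intro i; push_cast [ZMod.natCast_self]; ring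
      have harg2 : ∀ j : Fin r, ((1 + t j * p : ℤ) : ZMod p) = 1 := by
        intro j; push_cast [ZMod.natCast_self]; ring
      have harg3 : ((2 * (a:ℤ) - p : ℤ) : ZMod p) = (2 * a : ZMod p) := by
        push_cast [ZMod.natCast_self]; ring
      simp only [harg1, harg2, harg3, asc_eval_one, Finset.prod_const, Finset.card_univ,
        Fintype.card_fin]
      ring
    have hle := (Padic.norm_int_le_pow_iff_dvd (AA * DD - BB * CC) 1).mpr hdvd
    calc ‖((AA * DD - BB * CC : ℤ) : ℚ_[p])‖ ≤ (p:ℝ) ^ (-(1:ℕ) : ℤ) := hle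
      _ = (p : ℝ)⁻¹ := by
          rw [show (-(1:ℕ) : ℤ) = -1 by norm_num, zpow_neg_one]
  have part1 : ‖(∑ k ∈ Finset.range p,
          (∏ i, (ascPochhammer ℚ_[p] k).eval ((2 * a : ℚ_[p]) - s i * p))
            / ((∏ j, (ascPochhammer ℚ_[p] k).eval ((1 : ℚ_[p]) + t j * p))
                * (k.factorial : ℚ_[p])))
        - ∑ k ∈ Finset.range p,
          ((ascPochhammer ℚ_[p] k).eval ((2 * a : ℚ_[p]) - p)) ^ (r + 1)
            / (k.factorial : ℚ_[p]) ^ (r + 1)‖ ≤ (p : ℝ)⁻¹ := by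
    rw [← Finset.sum_sub_distrib]
    exact IsUltrametricDist.norm_sum_le_of_forall_le_of_nonneg (by positivity) key
  refine ⟨part1, fun hr => ?_⟩
  set m : ℕ := p - 2 * a with hmdef
  have hm1 : 1 ≤ m := by omega
  have hmp : m < p := by omega
  have hmodd : Odd m := Nat.Odd.sub_even (by omega) hp (even_two_mul a)
  have hterm : ∀ k : ℕ,
      ((ascPochhammer ℚ_[p] k).eval ((2 * a : ℚ_[p]) - p)) ^ (r + 1)
        / (k.factorial : ℚ_[p]) ^ (r + 1)
      = (-1 : ℚ_[p]) ^ k * ((m.choose k : ℚ_[p])) ^ (r + 1) := by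
    intro k
    have hfne : ((k.factorial : ℕ) : ℚ_[p]) ≠ 0 := Nat.cast_ne_zero.mpr k.factorial_ne_zero
    have hint : (ascPochhammer ℤ k).eval (-(m:ℤ))
        = (-1)^k * ((k.factorial * m.choose k : ℕ) : ℤ) := by
      rw [ascPochhammer_eval_neg_eq_descPochhammer, descPochhammer_eval_eq_descFactorial,
        ← Nat.descFactorial_eq_factorial_mul_choose]
    have harg : ((2 * a : ℚ_[p]) - p) = ((-(m:ℤ) : ℤ) : ℚ_[p]) := by
      push_cast [hmdef, Nat.cast_sub (show 2 * a ≤ p by omega)]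
      ring
    rw [harg, asc_eval_intCast, hint]
    push_cast
    rw [mul_pow, mul_pow,
      show ((-1 : ℚ_[p])^k)^(r+1) = (-1)^k by
        rw [← pow_mul, mul_comm k (r+1), pow_mul, (Even.add_one hr).neg_one_pow]]
    field_simp
  have hchoose0 : ∀ k : ℕ, m < k → (-1 : ℚ_[p]) ^ k * ((m.choose k : ℚ_[p])) ^ (r + 1) = 0 := by
    intro k hk
    rw [Nat.choose_eq_zero_of_lt hk]
    norm_num
  have hRzero : (∑ k ∈ Finset.range p,
      ((ascPochhammer ℚ_[p] k).eval ((2 * a : ℚ_[p]) - p)) ^ (r + 1)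
        / (k.factorial : ℚ_[p]) ^ (r + 1)) = 0 := by
    have hs1 : (∑ k ∈ Finset.range p,
        ((ascPochhammer ℚ_[p] k).eval ((2 * a : ℚ_[p]) - p)) ^ (r + 1)
          / (k.factorial : ℚ_[p]) ^ (r + 1))
        = ∑ k ∈ Finset.range (m+1), (-1 : ℚ_[p]) ^ k * ((m.choose k : ℚ_[p])) ^ (r + 1) := by
      rw [Finset.sum_congr rfl (fun k _ => hterm k)]
      refine (Finset.sum_subset (by rw [Finset.range_subset_range]; omega) ?_).symm
      intro x _ hx
      rw [Finset.mem_range, not_lt] at hx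
      exact hchoose0 x (by omega)
    rw [hs1]
    set S : ℚ_[p] := ∑ k ∈ Finset.range (m+1),
      (-1 : ℚ_[p]) ^ k * ((m.choose k : ℚ_[p])) ^ (r + 1) with hSdef
    have hrefl : S = -S := by
      calc S = ∑ j ∈ Finset.range (m+1),
            (-1 : ℚ_[p]) ^ (m - j) * ((m.choose (m - j) : ℚ_[p])) ^ (r + 1) := by
            rw [hSdef, ← Finset.sum_range_reflect
              (fun k => (-1 : ℚ_[p]) ^ k * ((m.choose k : ℚ_[p])) ^ (r + 1)) (m+1)]
            simp only [Nat.add_sub_cancel]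
        _ = ∑ j ∈ Finset.range (m+1),
            -((-1 : ℚ_[p]) ^ j * ((m.choose j : ℚ_[p])) ^ (r + 1)) := ?_
        _ = -S := by rw [hSdef, Finset.sum_neg_distrib]
      refine Finset.sum_congr rfl fun j hj => ?_
      rw [Finset.mem_range] at hj
      have hjm : j ≤ m := by omega
      have hsign : (-1 : ℚ_[p])^(m - j) = -(-1)^j := by
        have h1 : (-1 : ℚ_[p])^(m-j) * (-1)^j = (-1)^m := by
          rw [← pow_add, Nat.sub_add_cancel hjm]
        have h2 : ((-1 : ℚ_[p])^j) * ((-1)^j) = 1 := by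
          rw [← pow_add]
          exact Even.neg_one_pow ⟨j, rfl⟩
        calc (-1 : ℚ_[p])^(m-j) = (-1)^(m-j) * ((-1)^j * (-1)^j) := by rw [h2, mul_one]
          _ = ((-1)^m) * (-1)^j := by rw [← mul_assoc, h1]
          _ = -(-1)^j := by rw [hmodd.neg_one_pow, neg_one_mul]
      rw [hsign, Nat.choose_symm hjm]
      ring
    have h2S : (2 : ℚ_[p]) * S = 0 := by linear_combination hrefl
    rcases mul_eq_zero.mp h2S with h | h
    · exact absurd h two_ne_zero
    · exact h
  rw [show (∑ k ∈ Finset.range p,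
        (∏ i, (ascPochhammer ℚ_[p] k).eval ((2 * a : ℚ_[p]) - s i * p))
          / ((∏ j, (ascPochhammer ℚ_[p] k).eval ((1 : ℚ_[p]) + t j * p))
              * (k.factorial : ℚ_[p])))
      = (∑ k ∈ Finset.range p,
          (∏ i, (ascPochhammer ℚ_[p] k).eval ((2 * a : ℚ_[p]) - s i * p))
            / ((∏ j, (ascPochhammer ℚ_[p] k).eval ((1 : ℚ_[p]) + t j * p))
                * (k.factorial : ℚ_[p])))
        - ∑ k ∈ Finset.range p,
          ((ascPochhammer ℚ_[p] k).eval ((2 * a : ℚ_[p]) - p)) ^ (r + 1)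
            / (k.factorial : ℚ_[p]) ^ (r + 1) by rw [hRzero, sub_zero]]
  exact part1
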